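/- Let (λ_i)_i be a nonincreasing summable sequence of nonnegative reals with λ_i ≤ C·i^{-β} for some β > 1 and C > 0. Then for all λ > 0, N₁(λ) := Σ_i λ_i/(λ_i + λ) ≤ C' · λ^{-1/β} for some constant C' depending only on C and β. -/

import Mathlib

open Real Finset
set_option maxHeartbeats 1000000

-- step lemma
lemma step_ineq {β : ℝ} (hβ : 1 < β) {k : ℝ} (hk : 1 ≤ k) :
    (β - 1) * (k+1) ^ (-β) ≤ k ^ (1-β) - (k+1) ^ (1-β) := by
  have hk0 : (0:ℝ) < k := by linarith
  obtain ⟨c, hc, hceq⟩ := exists_hasDerivAt_eq_slope (fun x => x ^ (1-β))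
    (fun x => (1-β) * x ^ (1-β-1)) (by linarith : k < k+1)
    (by
      apply ContinuousOn.rpow_const continuousOn_id
      intro x hx; left; have := hx.1; intro h; simp only [id] at h; rw [h] at this; linarith)
    (fun x hx => Real.hasDerivAt_rpow_const (Or.inl (by have := hx.1; intro h; rw [h] at this; linarith)))
  have hc0 : 0 < c := lt_trans hk0 hc.1
  have hmono : (k+1) ^ (-β) ≤ c ^ (-β) :=
    Real.rpow_le_rpow_of_nonpos hc0 hc.2.le (by linarith)
  have : (1-β) * c ^ (1-β-1) = ((k+1) ^ (1-β) - k ^ (1-β)) / (k+1-k) := hceq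
  have h2 : (1-β) * c ^ (-β) = (k+1) ^ (1-β) - k ^ (1-β) := by
    rw [show (1-β-1 : ℝ) = -β by ring] at this
    field_simp at this; linarith [this]
  nlinarith [this, Real.rpow_nonneg hc0.le (-β), mul_le_mul_of_nonneg_left hmono (by linarith : (0:ℝ) ≤ β - 1)]

lemma tail_sum {β : ℝ} (hβ : 1 < β) {n : ℕ} (hn : 1 ≤ n) :
    ∑' i : ℕ, ((i:ℝ) + n + 1) ^ (-β) ≤ (n:ℝ) ^ (1-β) / (β-1) := by
  have hb1 : (0:ℝ) < β - 1 := by linarith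
  apply Real.tsum_le_of_sum_range_le
  · intro i
    exact Real.rpow_nonneg (by positivity) _
  · intro m
    rw [le_div_iff₀ hb1]
    have key : ∀ i ∈ Finset.range m, (β-1) * ((i:ℝ) + n + 1) ^ (-β)
        ≤ ((i:ℝ)+n) ^ (1-β) - ((i:ℝ)+n+1) ^ (1-β) := by
      intro i _
      have : (1:ℝ) ≤ (i:ℝ) + n := by
        have h1 : (1:ℝ) ≤ (n:ℝ) := by exact_mod_cast hn
        have h2 : (0:ℝ) ≤ (i:ℝ) := Nat.cast_nonneg i
        linarith
      have := step_ineq hβ this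
      convert this using 3 <;> ring
    calc (∑ i ∈ Finset.range m, ((i:ℝ) + n + 1) ^ (-β)) * (β-1)
        = ∑ i ∈ Finset.range m, (β-1) * ((i:ℝ) + n + 1) ^ (-β) := by
          rw [Finset.sum_mul]; congr 1; ext i; ring
      _ ≤ ∑ i ∈ Finset.range m, (((i:ℝ)+n) ^ (1-β) - ((i:ℝ)+n+1) ^ (1-β)) :=
          Finset.sum_le_sum key
      _ = ((0:ℝ)+n) ^ (1-β) - ((m:ℝ)+n) ^ (1-β) := by
          have := Finset.sum_range_sub' (fun i : ℕ => ((i:ℝ)+n) ^ (1-β)) m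
          simp only [Nat.cast_zero] at this ⊢
          rw [← this]; congr 1; ext i; push_cast; ring_nf
      _ ≤ (n:ℝ) ^ (1-β) := by
          rw [zero_add]
          have : (0:ℝ) ≤ ((m:ℝ)+n) ^ (1-β) := Real.rpow_nonneg (by positivity) _
          linarith

/-- If (λ_i) is a nonincreasing summable sequence of nonnegative reals with
λ_i ≤ C·i^{-β} (indices starting from 1, i.e. λ_i ≤ C·(i+1)^{-β} for i : ℕ), β > 1, C > 0,
then for all λ > 0, N₁(λ) = Σ_i λ_i/(λ_i+λ) ≤ C'·λ^{-1/β} for some C' depending on C, β. -/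
theorem stmt_2 (l : ℕ → ℝ) (C β : ℝ) (hβ : 1 < β) (hC : 0 < C)
    (hnn : ∀ i, 0 ≤ l i) (hmono : ∀ i j, i ≤ j → l j ≤ l i)
    (hsum : Summable l)
    (hdecay : ∀ i : ℕ, l i ≤ C * ((i : ℝ) + 1) ^ (-β)) :
    ∃ C' > 0, ∀ lam : ℝ, 0 < lam →
      ∑' i, l i / (l i + lam) ≤ C' * lam ^ (-(1 / β)) := by
  have hb1 : (0:ℝ) < β - 1 := by linarith
  set S := ∑' i, l i with hS
  have hS0 : 0 ≤ S := tsum_nonneg hnn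
  have hT1 : (0:ℝ) < C ^ (1/β) * (2 + 1/(β-1)) :=
    mul_pos (Real.rpow_pos_of_pos hC _) (by have := one_div_pos.2 hb1; linarith)
  have hT2 : 0 ≤ S * C ^ (1/β - 1) :=
    mul_nonneg hS0 (Real.rpow_pos_of_pos hC _).le
  refine ⟨C ^ (1/β) * (2 + 1/(β-1)) + S * C ^ (1/β - 1) + 1, by linarith, ?_⟩
  intro lam hlam
  have hlamb : (0:ℝ) < lam ^ (-(1/β)) := Real.rpow_pos_of_pos hlam _
  have hf_nonneg : ∀ i, 0 ≤ l i / (l i + lam) :=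
    fun i => div_nonneg (hnn i) (by linarith [hnn i])
  have hfle : ∀ i, l i / (l i + lam) ≤ l i / lam := by
    intro i
    apply div_le_div_of_nonneg_left (hnn i) hlam
    linarith [hnn i]
  have hsum' : Summable (fun i => l i / lam) := hsum.div_const lam
  have hfsum : Summable (fun i => l i / (l i + lam)) :=
    hsum'.of_nonneg_of_le hf_nonneg hfle
  rcases le_or_gt lam C with hcase | hcase
  · -- small lam
    set A := (C/lam) ^ (1/β) with hA
    have hClam : (0:ℝ) < C/lam := by positivity
    have hCl : 1 ≤ C / lam := (one_le_div hlam).2 hcase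
    have hA1 : 1 ≤ A := by
      have := Real.rpow_le_rpow zero_le_one hCl (by positivity : (0:ℝ) ≤ 1/β)
      rwa [Real.one_rpow] at this
    have hA0 : 0 < A := by linarith
    set n := ⌈A⌉₊ with hn
    have hn1 : 1 ≤ n := Nat.one_le_iff_ne_zero.2 (by
      have : 0 < n := Nat.ceil_pos.2 hA0
      omega)
    have hnA : A ≤ n := Nat.le_ceil A
    have hnA2 : (n:ℝ) ≤ A + 1 := (Nat.ceil_lt_add_one hA0.le).le
    rw [← hfsum.sum_add_tsum_nat_add n]
    have hblock1 : ∑ i ∈ Finset.range n, l i / (l i + lam) ≤ (n:ℝ) := by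
      calc ∑ i ∈ Finset.range n, l i / (l i + lam)
          ≤ ∑ i ∈ Finset.range n, (1:ℝ) := by
            apply Finset.sum_le_sum
            intro i _
            apply div_le_one_of_le₀ (by linarith [hnn i]) (by linarith [hnn i])
        _ = (n:ℝ) := by simp
    have hblock2 : ∑' i, l (i+n) / (l (i+n) + lam)
        ≤ (C/lam) * ((n:ℝ)^(1-β)/(β-1)) := by
      have hle2 : ∀ i:ℕ, l (i+n)/(l (i+n)+lam) ≤ (C/lam) * ((i:ℝ)+(n:ℝ)+1)^(-β) := by
        intro i
        calc l (i+n)/(l (i+n)+lam) ≤ l (i+n)/lam := hfle _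
          _ ≤ (C * (((i+n:ℕ):ℝ)+1)^(-β))/lam := by
              gcongr
              exact hdecay (i+n)
          _ = (C/lam) * ((i:ℝ)+(n:ℝ)+1)^(-β) := by push_cast; ring
      have hs2 : Summable (fun i:ℕ => (C/lam) * ((i:ℝ)+(n:ℝ)+1)^(-β)) := by
        apply Summable.mul_left
        have h0 : Summable (fun m:ℕ => ((m:ℝ))^(-β)) :=
          Real.summable_nat_rpow.2 (by linarith)
        have h1 := (summable_nat_add_iff (n+1)).2 h0
        apply h1.congr
        intro i
        push_cast
        ring_nf
      calc ∑' i, l (i+n)/(l (i+n)+lam)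
          ≤ ∑' i : ℕ, (C/lam)*((i:ℝ)+(n:ℝ)+1)^(-β) :=
            Summable.tsum_le_tsum hle2 ((summable_nat_add_iff n).2 hfsum) hs2
        _ = (C/lam) * ∑' i : ℕ, ((i:ℝ)+(n:ℝ)+1)^(-β) := tsum_mul_left
        _ ≤ (C/lam) * ((n:ℝ)^(1-β)/(β-1)) :=
            mul_le_mul_of_nonneg_left (tail_sum hβ hn1) hClam.le
    have hnb : (n:ℝ)^(1-β) ≤ A^(1-β) :=
      Real.rpow_le_rpow_of_nonpos hA0 hnA (by linarith)
    have hAA : (C/lam) * A^(1-β) = A := by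
      have e1 := Real.rpow_mul hClam.le (1/β) (1-β)
      have e2 : (C/lam) * (C/lam)^((1/β)*(1-β)) = (C/lam)^(1+(1/β)*(1-β)) := by
        rw [Real.rpow_add hClam, Real.rpow_one]
      have e3 : 1+(1/β)*(1-β) = 1/β := by field_simp; ring
      rw [hA, ← e1, e2, e3]
    have h3 : (C/lam)*((n:ℝ)^(1-β)/(β-1)) ≤ A/(β-1) := by
      have hmul := mul_le_mul_of_nonneg_left hnb hClam.le
      rw [hAA] at hmul
      calc (C/lam)*((n:ℝ)^(1-β)/(β-1)) = ((C/lam)*(n:ℝ)^(1-β))/(β-1) := by ring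
        _ ≤ A/(β-1) := by gcongr
    have hAeq : A = C^(1/β) * lam^(-(1/β)) := by
      rw [hA, Real.div_rpow hC.le hlam.le, Real.rpow_neg hlam.le, div_eq_mul_inv]
    have hfinal : (n:ℝ) + (C/lam)*((n:ℝ)^(1-β)/(β-1)) ≤ A * (2 + 1/(β-1)) := by
      have hd : A/(β-1) = A * (1/(β-1)) := by ring
      rw [hd] at h3
      nlinarith [one_div_pos.2 hb1]
    have : A * (2 + 1/(β-1)) ≤ (C ^ (1/β) * (2 + 1/(β-1)) + S * C ^ (1/β - 1) + 1) * lam ^ (-(1/β)) := by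
      rw [hAeq]
      nlinarith [hlamb, hT2]
    linarith [add_le_add hblock1 hblock2]
  · -- large lam
    have h1 : ∑' i, l i/(l i+lam) ≤ S/lam := by
      have := Summable.tsum_le_tsum hfle hfsum hsum'
      rwa [tsum_div_const] at this
    have hexp : (1:ℝ)/β - 1 ≤ 0 := by
      have : 1/β < 1 := by
        rw [div_lt_one (by linarith)]
        exact hβ
      linarith
    have hrl : lam^((1:ℝ)/β-1) ≤ C^((1:ℝ)/β-1) :=
      Real.rpow_le_rpow_of_nonpos hC hcase.le hexp
    have hinv : lam⁻¹ = lam^(-(1/β)) * lam^((1:ℝ)/β-1) := by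
      rw [← Real.rpow_add hlam]
      rw [show -(1/β)+((1:ℝ)/β-1) = (-1:ℝ) by ring, Real.rpow_neg_one]
    have h2 : S/lam ≤ S * C^((1:ℝ)/β-1) * lam^(-(1/β)) := by
      calc S/lam = S * lam⁻¹ := div_eq_mul_inv S lam
        _ = S * (lam^(-(1/β)) * lam^((1:ℝ)/β-1)) := by rw [hinv]
        _ ≤ S * (lam^(-(1/β)) * C^((1:ℝ)/β-1)) := by
            apply mul_le_mul_of_nonneg_left _ hS0
            exact mul_le_mul_of_nonneg_left hrl hlamb.le
        _ = S * C^((1:ℝ)/β-1) * lam^(-(1/β)) := by ring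
    have h4 : S * C^((1:ℝ)/β-1) * lam^(-(1/β))
        ≤ (C ^ (1/β) * (2 + 1/(β-1)) + S * C ^ (1/β - 1) + 1) * lam ^ (-(1/β)) := by
      nlinarith [hlamb, hT1]
    linarith
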